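/- Let λ = (λ₁ ≥ ⋯ ≥ λ_r > 0) be a partition of length r ≥ 1 with flagging f = (f₁ ≤ ⋯ ≤ f_r), and assume f₁ = 1. Set λ' = (λ₂, …, λ_r) and f' = (f₂, …, f_r). Then G̃_{λ,f} = x₁^{λ₁} · ( G̃_{λ',f'} |_{x₁=0} ), where f|_{x₁=0} denotes the result of substituting x₁ = 0 in f ∈ R. -/

import Mathlib

/- Common setup: `R = ℤ[β][[x₀,x₁,x₂,…]]` with `β = Polynomial.X`; only the
variables `x i` for `i ≥ 1` are used in the statements. -/

attribute [local instance] Classical.propDecidable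

noncomputable section

abbrev A : Type := Polynomial ℤ
abbrev R : Type := MvPowerSeries ℕ A

/-- the element β -/
def bR : R := MvPowerSeries.C (σ := ℕ) (R := A) Polynomial.X

/-- the variable `x i` -/
def Xv (i : ℕ) : R := MvPowerSeries.X i

/-- total degree of a monomial -/
def degSum (d : ℕ →₀ ℕ) : ℕ := d.sum fun _ n => n

/-- the ring automorphism `s i` exchanging `x i` and `x (i+1)` -/
def sOp (i : ℕ) (f : R) : R := fun d => f (Finsupp.equivMapDomain (Equiv.swap i (i+1)) d)

/-- the divided difference operator `π i`, characterized by
`(x i - x (i+1)) * π i f = (1 + β x (i+1)) f - (1 + β x i) (s i f)`. -/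
def ddiff (i : ℕ) (f : R) : R :=
  Classical.epsilon fun gq : R =>
    (Xv i - Xv (i+1)) * gq = (1 + bR * Xv (i+1)) * f - (1 + bR * Xv i) * sOp i f

/-- complete homogeneous symmetric function of degree `j` in the variables `x_q, …, x_p` -/
def hsym (q p : ℕ) (j : ℤ) : R := fun d =>
  if (∀ k ∈ d.support, q ≤ k ∧ k ≤ p) ∧ (degSum d : ℤ) = j then 1 else 0

/-- `∏_{i=q}^{p} (1 + β x_i)` -/
def prodOneAdd (q p : ℕ) : R := ∏ i ∈ Finset.Icc q p, (1 + bR * Xv i)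

/-- `G_m^{[p/q]} = Σ_{s≥0} (−β)^s (∏_{i=q}^p (1+βx_i)) h_{m+s}(x_q,…,x_p)`,
defined coefficientwise (only the terms with `m + s ≤ deg d` can contribute to the
coefficient at a monomial `d`). -/
def Gsk (p q : ℕ) (m : ℤ) : R := fun d =>
  ∑ s ∈ Finset.range (((degSum d : ℤ) - m).toNat + 1),
    (-Polynomial.X : A) ^ s * MvPowerSeries.coeff (R := A) d (prodOneAdd q p * hsym q p (m + s))

/-- `G_m^{[p]} = G_m^{[p/1]}` -/
def Gk (p : ℕ) (m : ℤ) : R := Gsk p 1 m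

/-- the geometric series `Σ_{s≥0} (−β x_i)^s = 1/(1+βx_i)` -/
def geom (i : ℕ) : R := fun d =>
  if d.support ⊆ {i} then (-Polynomial.X : A) ^ (d i) else 0

/-- substitution of `x₁ = 0` -/
def setX1Zero (f : R) : R := fun d => if d 1 = 0 then f d else 0

/-- generalized binomial coefficient `C(c,s) = c(c−1)⋯(c−s+1)/s!` for `c : ℤ` -/
def intChoose (c : ℤ) (s : ℕ) : ℤ :=
  if 0 ≤ c then (c.toNat.choose s : ℤ) else (-1) ^ s * (((s : ℤ) - 1 - c).toNat.choose s : ℤ)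

/-- `Σ_{s≥0} C(c,s) β^s G_{m+s}^{[p/q]}`, defined coefficientwise. -/
def JT (p q : ℕ) (c m : ℤ) : R := fun d =>
  ∑ s ∈ Finset.range (((degSum d : ℤ) - m).toNat + 1),
    ((intChoose c s : ℤ) : A) * Polynomial.X ^ s * MvPowerSeries.coeff (R := A) d (Gsk p q (m + s))

/-- the Jacobi–Trudi type determinant `G̃_{λ/μ,f/g}` (rows and columns indexed by
`Fin r`, with `i : Fin r` representing the 1-based index `i+1`). -/
def GtildeSkew (r : ℕ) (lam mu f g : Fin r → ℕ) : R :=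
  Matrix.det (Matrix.of fun i j : Fin r =>
    JT (f i) (g j) ((i : ℤ) - (j : ℤ))
      ((lam i : ℤ) - (mu j : ℤ) + (j : ℤ) - (i : ℤ)))

/-- the Jacobi–Trudi type determinant `G̃_{λ,f}` -/
def Gtilde (r : ℕ) (lam f : Fin r → ℕ) : R :=
  GtildeSkew r lam (fun _ => 0) f (fun _ => 1)

/-- flagged skew set-valued tableaux of shape `λ/μ` with flagging `f/g`:
a tableau assigns to the box in row `i` (1-based index `i+1`), column `j`
(with `μᵢ < j ≤ λᵢ`) a nonempty subset of `{gᵢ,…,fᵢ}`, weakly increasing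
along rows and strictly increasing along columns; boxes outside the shape
carry `∅`. -/
def IsFSVT (r : ℕ) (lam mu f g : Fin r → ℕ) (T : Fin r × ℕ → Finset ℕ) : Prop :=
  (∀ (i : Fin r) (j : ℕ), ¬ (mu i < j ∧ j ≤ lam i) → T (i, j) = ∅) ∧
  (∀ (i : Fin r) (j : ℕ), mu i < j → j ≤ lam i → (T (i, j)).Nonempty) ∧
  (∀ (i : Fin r) (j k : ℕ), k ∈ T (i, j) → g i ≤ k ∧ k ≤ f i) ∧
  (∀ (i : Fin r) (j : ℕ), mu i < j → j + 1 ≤ lam i →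
     ∀ a ∈ T (i, j), ∀ b ∈ T (i, j + 1), a ≤ b) ∧
  (∀ (i : Fin r) (h : (i : ℕ) + 1 < r) (j : ℕ),
     mu i < j → j ≤ lam i → mu ⟨(i : ℕ) + 1, h⟩ < j → j ≤ lam ⟨(i : ℕ) + 1, h⟩ →
     ∀ a ∈ T (i, j), ∀ b ∈ T (⟨(i : ℕ) + 1, h⟩, j), a < b)

/-- the total number `|T|` of entries of a tableau -/
def entriesCount (r : ℕ) (lam mu : Fin r → ℕ) (T : Fin r × ℕ → Finset ℕ) : ℕ :=
  ∑ i : Fin r, ∑ j ∈ Finset.Ioc (mu i) (lam i), (T (i, j)).card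

/-- `|λ/μ|` -/
def shapeSize (r : ℕ) (lam mu : Fin r → ℕ) : ℕ := ∑ i : Fin r, (lam i - mu i)

/-- the weight `β^{|T|−|λ/μ|} ∏_{k∈T} x_k` of a tableau -/
def wt (r : ℕ) (lam mu : Fin r → ℕ) (T : Fin r × ℕ → Finset ℕ) : R :=
  bR ^ (entriesCount r lam mu T - shapeSize r lam mu) *
    ∏ i : Fin r, ∏ j ∈ Finset.Ioc (mu i) (lam i), ∏ k ∈ T (i, j), Xv k

/-- the flagged skew Grothendieck polynomial `G_{λ/μ,f/g}` as the (finite) sum of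
the weights of all flagged skew set-valued tableaux -/
def GF (r : ℕ) (lam mu f g : Fin r → ℕ) : R :=
  ∑ᶠ (T : Fin r × ℕ → Finset ℕ) (_ : IsFSVT r lam mu f g T), wt r lam mu T

/- permutations: `w ∈ S_n` is encoded as a permutation of `ℕ` fixing `0` and
everything `> n`. -/

/-- `w` belongs to `S_n` -/
def isSn (n : ℕ) (w : Equiv.Perm ℕ) : Prop := ∀ k, k = 0 ∨ n < k → w k = k

/-- Coxeter length = number of inversions -/
def len (n : ℕ) (w : Equiv.Perm ℕ) : ℕ :=
  (((Finset.Icc 1 n) ×ˢ (Finset.Icc 1 n)).filter fun pr : ℕ × ℕ =>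
    pr.1 < pr.2 ∧ w pr.2 < w pr.1).card

/-- the rank function `r_w(p,q) = #{i ≤ p : w(i) ≤ q}` -/
def rankf (w : Equiv.Perm ℕ) (p q : ℕ) : ℕ :=
  ((Finset.Icc 1 p).filter fun i => w i ≤ q).card

/-- the diagram `D(w)` -/
def inD (n : ℕ) (w : Equiv.Perm ℕ) (p q : ℕ) : Prop :=
  1 ≤ p ∧ p ≤ n ∧ 1 ≤ q ∧ q ≤ n ∧ q < w p ∧ p < w.symm q

/-- the essential set `Ess(w)` -/
def inEss (n : ℕ) (w : Equiv.Perm ℕ) (p q : ℕ) : Prop :=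
  inD n w p q ∧ ¬ inD n w (p+1) q ∧ ¬ inD n w p (q+1)

/-- `w ∈ S_n` is vexillary: it avoids the pattern 2143 -/
def Vexillary (n : ℕ) (w : Equiv.Perm ℕ) : Prop :=
  ¬ ∃ a b c d : ℕ, 1 ≤ a ∧ a < b ∧ b < c ∧ c < d ∧ d ≤ n ∧
      w b < w a ∧ w a < w d ∧ w d < w c

lemma coeff_eq (F : R) (d : ℕ →₀ ℕ) : F d = MvPowerSeries.coeff (R := A) d F := rfl

lemma degSum_add (a b : ℕ →₀ ℕ) : degSum (a+b) = degSum a + degSum b := by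
  simp [degSum, Finsupp.sum_add_index]

lemma degSum_single (i a : ℕ) : degSum (Finsupp.single i a) = a := by
  simp [degSum, Finsupp.sum_single_index]

lemma degSum_sub_single {d : ℕ →₀ ℕ} {i : ℕ} (h : d i ≠ 0) :
    degSum d = degSum (d - Finsupp.single i 1) + 1 := by
  have hle : Finsupp.single i 1 ≤ d := Finsupp.single_le_iff.2 (by omega)
  conv_lhs => rw [← tsub_add_cancel_of_le hle]
  rw [degSum_add, degSum_single]

lemma coeff_X_mul (i : ℕ) (F : R) (d : ℕ →₀ ℕ) :
    (Xv i * F) d = if d i = 0 then 0 else F (d - Finsupp.single i 1) := by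
  rw [coeff_eq (Xv i * F) d, Xv, MvPowerSeries.coeff_mul]
  by_cases h : d i = 0
  · rw [if_pos h]
    apply Finset.sum_eq_zero
    rintro ⟨e, e'⟩ hm
    rw [Finset.HasAntidiagonal.mem_antidiagonal] at hm
    rw [MvPowerSeries.coeff_X]
    have : e i + e' i = d i := by rw [← hm]; rfl
    split_ifs with he
    · subst he; simp [Finsupp.single_eq_same] at this; omega
    · simp
  · rw [if_neg h]
    have hle : Finsupp.single i 1 ≤ d := Finsupp.single_le_iff.2 (by omega)
    rw [Finset.sum_eq_single_of_mem (⟨Finsupp.single i 1, d - Finsupp.single i 1⟩ : (ℕ →₀ ℕ) × _)]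
    · rw [MvPowerSeries.coeff_X, if_pos rfl, one_mul, ← coeff_eq]
    · rw [Finset.HasAntidiagonal.mem_antidiagonal]; exact add_tsub_cancel_of_le hle
    · rintro ⟨e, e'⟩ hm hne
      rw [Finset.HasAntidiagonal.mem_antidiagonal] at hm
      rw [MvPowerSeries.coeff_X]
      split_ifs with he
      · exfalso; apply hne; subst he
        have : e' = d - Finsupp.single i 1 := eq_tsub_of_add_eq (by rw [add_comm]; exact hm)
        rw [this]
      · simp

lemma coeff_bR_mul (F : R) (d : ℕ →₀ ℕ) : (bR * F) d = Polynomial.X * F d := by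
  rw [coeff_eq (bR * F) d, bR, MvPowerSeries.coeff_C_mul, ← coeff_eq]

lemma coeff_u_mul (i : ℕ) (F : R) (d : ℕ →₀ ℕ) :
    ((1 + bR * Xv i) * F) d = F d + Polynomial.X * ((Xv i * F) d) := by
  have h : (1 + bR * Xv i) * F = F + bR * (Xv i * F) := by ring
  rw [coeff_eq ((1 + bR * Xv i) * F) d, h, map_add, ← coeff_eq, ← coeff_eq, coeff_bR_mul]

lemma supp_sub_single {d : ℕ →₀ ℕ} {i k : ℕ} (hk : k ≠ i) :
    (d - Finsupp.single i 1 : ℕ →₀ ℕ) k = d k := by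
  rw [Finsupp.tsub_apply, Finsupp.single_eq_of_ne' (fun h => hk h.symm), Nat.sub_zero]

lemma prod_coeff_vanish {S : Finset ℕ} {i : ℕ} (hi : i ∉ S) {e : ℕ →₀ ℕ} (he : e i ≠ 0) :
    (∏ k ∈ S, (1 + bR * Xv k)) e = 0 := by
  induction S using Finset.induction_on generalizing e with
  | empty =>
      rw [Finset.prod_empty, coeff_eq 1 e, MvPowerSeries.coeff_one, if_neg]
      intro h; subst h; simp at he
  | @insert a S ha ih =>
      have hiS : i ∉ S := fun h => hi (Finset.mem_insert_of_mem h)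
      have hia : i ≠ a := fun h => hi (h ▸ Finset.mem_insert_self a S)
      rw [Finset.prod_insert ha, coeff_u_mul a _ e, ih hiS he, coeff_X_mul, zero_add]
      split_ifs with h
      · simp
      · rw [ih hiS (by rwa [supp_sub_single hia])]; simp

lemma prodOneAdd_split {p : ℕ} (hp : 1 ≤ p) :
    prodOneAdd 1 p = (1 + bR * Xv 1) * prodOneAdd 2 p := by
  have h2 : Finset.Icc 2 p = Finset.Ioc 1 p := by ext x; simp; omega
  rw [prodOneAdd, prodOneAdd, h2, ← Finset.Ioc_insert_left hp, Finset.prod_insert (by simp)]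

lemma degSum_pos {d : ℕ →₀ ℕ} {i : ℕ} (h : d i ≠ 0) : 1 ≤ degSum d := by
  rw [degSum_sub_single h]; omega

lemma hsym_rec {p : ℕ} (hp : 1 ≤ p) (j : ℤ) :
    hsym 1 p j = Xv 1 * hsym 1 p (j-1) + hsym 2 p j := by
  funext d
  rw [coeff_eq (_ + _) d, map_add, ← coeff_eq, ← coeff_eq, coeff_X_mul]
  by_cases h1 : d 1 = 0
  · rw [if_pos h1, zero_add, hsym, hsym]
    have : (∀ k ∈ d.support, 1 ≤ k ∧ k ≤ p) ↔ (∀ k ∈ d.support, 2 ≤ k ∧ k ≤ p) := by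
      constructor
      · intro h k hk
        have hk1 : k ≠ 1 := by rintro rfl; exact (Finsupp.mem_support_iff.1 hk) h1
        have := h k hk; omega
      · intro h k hk; have := h k hk; omega
    simp only [this]
  · rw [if_neg h1, hsym, hsym, hsym]
    have h2 : (if (∀ k ∈ d.support, 2 ≤ k ∧ k ≤ p) ∧ (degSum d : ℤ) = j then (1:A) else 0) = 0 := by
      rw [if_neg]; rintro ⟨h, -⟩
      have := h 1 (Finsupp.mem_support_iff.2 h1); omega
    rw [h2, add_zero]
    set d' := d - Finsupp.single 1 1 with hd'
    have hsupp : (∀ k ∈ d.support, 1 ≤ k ∧ k ≤ p) ↔ (∀ k ∈ d'.support, 1 ≤ k ∧ k ≤ p) := by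
      constructor
      · intro h k hk; exact h k (Finsupp.support_tsub hk)
      · intro h k hk
        by_cases hk1 : k = 1
        · subst hk1; omega
        · exact h k (Finsupp.mem_support_iff.2 (by rw [supp_sub_single hk1]; exact Finsupp.mem_support_iff.1 hk))
    have hdeg : degSum d = degSum d' + 1 := degSum_sub_single h1
    have hdegiff : ((degSum d : ℤ) = j) ↔ ((degSum d' : ℤ) = j - 1) := by omega
    simp only [hsupp, hdegiff]

lemma hsym2_vanish {p : ℕ} {j : ℤ} {d : ℕ →₀ ℕ} (h1 : d 1 ≠ 0) : hsym 2 p j d = 0 := by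
  rw [hsym]; rw [if_neg]; rintro ⟨h, -⟩
  have := h 1 (Finsupp.mem_support_iff.2 h1); omega

lemma hsym_apply (q p : ℕ) (j : ℤ) (d : ℕ →₀ ℕ) : hsym q p j d =
    (if (∀ k ∈ d.support, q ≤ k ∧ k ≤ p) ∧ (degSum d : ℤ) = j then (1:A) else 0) := rfl

lemma coeff_add (X Y : R) (d : ℕ →₀ ℕ) : (X + Y) d = X d + Y d := by
  rw [coeff_eq (X+Y) d, map_add, ← coeff_eq, ← coeff_eq]

lemma GskC_vanish {q p : ℕ} {j : ℤ} {d : ℕ →₀ ℕ} (h : (degSum d : ℤ) < j) :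
    (prodOneAdd q p * hsym q p j) d = 0 := by
  rw [coeff_eq (prodOneAdd q p * hsym q p j) d, MvPowerSeries.coeff_mul]
  apply Finset.sum_eq_zero
  rintro ⟨e, e'⟩ hm
  rw [Finset.HasAntidiagonal.mem_antidiagonal] at hm
  dsimp only at hm ⊢
  have hdeg : degSum e' ≤ degSum d := by rw [← hm, degSum_add]; omega
  rw [← coeff_eq (hsym q p j) e', hsym_apply, if_neg, mul_zero]
  rintro ⟨-, h2⟩; omega

lemma Gsk_eq_sum (p q : ℕ) (m : ℤ) (d : ℕ →₀ ℕ) {N : ℕ}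
    (hN : ((degSum d : ℤ) - m).toNat + 1 ≤ N) :
    Gsk p q m d = ∑ s ∈ Finset.range N,
      (-Polynomial.X : A) ^ s * (prodOneAdd q p * hsym q p (m + s)) d := by
  show (∑ s ∈ Finset.range (((degSum d : ℤ) - m).toNat + 1),
    (-Polynomial.X : A) ^ s * MvPowerSeries.coeff (R := A) d (prodOneAdd q p * hsym q p (m + s))) = _
  simp_rw [← coeff_eq]
  apply Finset.sum_subset (Finset.range_subset_range.2 hN)
  intro s hs hs'
  rw [Finset.mem_range, not_lt] at hs'
  rw [GskC_vanish (by omega), mul_zero]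

lemma Gsk_vanish {p q : ℕ} {m : ℤ} {d : ℕ →₀ ℕ} (h : (degSum d : ℤ) < m) :
    Gsk p q m d = 0 := by
  show (∑ s ∈ Finset.range _, _) = 0
  apply Finset.sum_eq_zero
  intro s _
  rw [← coeff_eq, GskC_vanish (by omega), mul_zero]

lemma GskC_rec {p : ℕ} (hp : 1 ≤ p) (j : ℤ) :
    prodOneAdd 1 p * hsym 1 p j =
      Xv 1 * (prodOneAdd 1 p * hsym 1 p (j-1)) + (1 + bR * Xv 1) * (prodOneAdd 2 p * hsym 2 p j) := by
  rw [hsym_rec hp j, prodOneAdd_split hp]; ring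

lemma GskC_x1zero {p : ℕ} (hp : 1 ≤ p) {j : ℤ} {d : ℕ →₀ ℕ} (h1 : d 1 = 0) :
    (prodOneAdd 1 p * hsym 1 p j) d = (prodOneAdd 2 p * hsym 2 p j) d := by
  rw [coeff_eq (prodOneAdd 1 p * hsym 1 p j) d, coeff_eq (prodOneAdd 2 p * hsym 2 p j) d, MvPowerSeries.coeff_mul, MvPowerSeries.coeff_mul]
  apply Finset.sum_congr rfl
  rintro ⟨e, e'⟩ hm
  rw [Finset.HasAntidiagonal.mem_antidiagonal] at hm
  have he : e 1 = 0 ∧ e' 1 = 0 := by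
    have : e 1 + e' 1 = d 1 := by rw [← hm]; rfl
    omega
  congr 1
  · rw [← coeff_eq, ← coeff_eq, prodOneAdd_split hp, coeff_u_mul, coeff_X_mul, if_pos he.1,
      mul_zero, add_zero]
  · rw [← coeff_eq (hsym 1 p j) e', ← coeff_eq (hsym 2 p j) e', hsym_apply, hsym_apply]
    have : (∀ k ∈ e'.support, 1 ≤ k ∧ k ≤ p) ↔ (∀ k ∈ e'.support, 2 ≤ k ∧ k ≤ p) := by
      constructor
      · intro h k hk
        have hk1 : k ≠ 1 := by rintro rfl; exact (Finsupp.mem_support_iff.1 hk) he.2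
        have := h k hk; omega
      · intro h k hk; have := h k hk; omega
    simp only [this]

lemma Gsk_x1zero {p : ℕ} (hp : 1 ≤ p) {m : ℤ} {d : ℕ →₀ ℕ} (h1 : d 1 = 0) :
    Gsk p 1 m d = Gsk p 2 m d := by
  rw [Gsk_eq_sum p 1 m d (le_refl _), Gsk_eq_sum p 2 m d (le_refl _)]
  exact Finset.sum_congr rfl fun s _ => by rw [GskC_x1zero hp h1]

lemma GskC2_x1 {p : ℕ} {j : ℤ} {d : ℕ →₀ ℕ} (h1 : d 1 ≠ 0) :
    (prodOneAdd 2 p * hsym 2 p j) d = 0 := by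
  rw [coeff_eq (prodOneAdd 2 p * hsym 2 p j) d, MvPowerSeries.coeff_mul]
  apply Finset.sum_eq_zero
  rintro ⟨e, e'⟩ hm
  rw [Finset.HasAntidiagonal.mem_antidiagonal] at hm
  have hsum : e 1 + e' 1 = d 1 := by rw [← hm]; rfl
  by_cases he' : e' 1 = 0
  · have he : e 1 ≠ 0 := by omega
    rw [← coeff_eq, prodOneAdd, prod_coeff_vanish (by simp) he, zero_mul]
  · rw [← coeff_eq (hsym 2 p j) e', hsym2_vanish he', mul_zero]

lemma Gsk2_x1 {p : ℕ} {m : ℤ} {d : ℕ →₀ ℕ} (h1 : d 1 ≠ 0) : Gsk p 2 m d = 0 := by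
  show (∑ s ∈ Finset.range _, _) = 0
  apply Finset.sum_eq_zero
  intro s _
  rw [← coeff_eq, GskC2_x1 h1, mul_zero]

lemma Gsk_rec {p : ℕ} (hp : 1 ≤ p) (m : ℤ) :
    Gsk p 1 m = Xv 1 * Gsk p 1 (m-1) + (1 + bR * Xv 1) * Gsk p 2 m := by
  funext d
  rw [coeff_add, coeff_X_mul, coeff_u_mul, coeff_X_mul]
  by_cases h1 : d 1 = 0
  · rw [if_pos h1, if_pos h1, zero_add, mul_zero, add_zero]
    exact Gsk_x1zero hp h1
  · rw [if_neg h1, if_neg h1]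
    set d' := d - Finsupp.single 1 1 with hd'
    have hD : degSum d = degSum d' + 1 := degSum_sub_single h1
    set N := ((degSum d : ℤ) - m).toNat + 1 with hNdef
    have key : ∀ s : ℕ, (prodOneAdd 1 p * hsym 1 p (m + s)) d
        = (prodOneAdd 1 p * hsym 1 p ((m-1) + s)) d'
          + ((prodOneAdd 2 p * hsym 2 p (m + s)) d
             + Polynomial.X * (prodOneAdd 2 p * hsym 2 p (m + s)) d') := by
      intro s
      have h2 : m + s - 1 = (m - 1) + s := by ring
      rw [congrFun (GskC_rec hp (m + s)) d, coeff_add, coeff_X_mul, coeff_u_mul, coeff_X_mul,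
        if_neg h1, if_neg h1, h2]
    rw [Gsk_eq_sum p 1 m d (le_refl _)]
    rw [Gsk_eq_sum p 1 (m-1) d' (N := N) (by omega)]
    rw [Gsk_eq_sum p 2 m d (le_refl _)]
    rw [Gsk_eq_sum p 2 m d' (N := N) (by omega)]
    simp_rw [key, mul_add]
    rw [Finset.sum_add_distrib, Finset.sum_add_distrib, Finset.mul_sum]
    congr 2
    apply Finset.sum_congr rfl
    intro s _
    ring

lemma intChoose_zero (c : ℤ) : intChoose c 0 = 1 := by
  unfold intChoose; split_ifs <;> simp

lemma intChoose_zero_succ (s : ℕ) : intChoose 0 (s+1) = 0 := by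
  unfold intChoose
  rw [if_pos le_rfl]
  simp [Nat.choose_eq_zero_of_lt]

lemma pascal (c : ℤ) (s : ℕ) : intChoose (c+1) (s+1) = intChoose c (s+1) + intChoose c s := by
  unfold intChoose
  by_cases h0 : 0 ≤ c
  · rw [if_pos h0, if_pos h0, if_pos (by omega)]
    have h : (c+1).toNat = c.toNat + 1 := by omega
    rw [h, Nat.choose_succ_succ]
    push_cast; ring
  · rw [if_neg h0, if_neg h0]
    by_cases h1 : c = -1
    · subst h1
      rw [if_pos (by omega)]
      have e1 : ((0:ℤ)+(-1)+1).toNat = 0 := by omega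
      have e2 : (((s:ℤ)+1) - 1 - (-1)).toNat = s + 1 := by omega
      have e3 : ((s:ℤ) - 1 - (-1)).toNat = s := by omega
      push_cast [e2, e3]
      simp [Nat.choose_eq_zero_of_lt, Nat.choose_self, pow_succ]
    · rw [if_neg (by omega)]
      have h2 : c ≤ -2 := by omega
      set n := (-1-c).toNat with hn
      have hnc : (-1 - c : ℤ) = n := by omega
      have e1 : (((s:ℕ)+1:ℤ) - 1 - (c+1)).toNat = s + n := by omega
      have e2 : (((s:ℕ)+1:ℤ) - 1 - c).toNat = (s + n) + 1 := by omega
      have e3 : ((s:ℤ) - 1 - c).toNat = s + n := by omega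
      push_cast [e1, e2, e3]
      rw [Nat.choose_succ_succ]
      push_cast
      ring

lemma JT_apply (p q : ℕ) (c m : ℤ) (d : ℕ →₀ ℕ) : JT p q c m d =
    ∑ s ∈ Finset.range (((degSum d : ℤ) - m).toNat + 1),
      ((intChoose c s : ℤ) : A) * Polynomial.X ^ s * Gsk p q (m + s) d := rfl

lemma JT_eq_sum (p q : ℕ) (c m : ℤ) (d : ℕ →₀ ℕ) {N : ℕ}
    (hN : ((degSum d : ℤ) - m).toNat + 1 ≤ N) :
    JT p q c m d = ∑ s ∈ Finset.range N,
      ((intChoose c s : ℤ) : A) * Polynomial.X ^ s * Gsk p q (m + s) d := by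
  rw [JT_apply]
  apply Finset.sum_subset (Finset.range_subset_range.2 hN)
  intro s hs hs'
  rw [Finset.mem_range, not_lt] at hs'
  rw [Gsk_vanish (by omega), mul_zero]

lemma JT_x1zero {p : ℕ} (hp : 1 ≤ p) {c m : ℤ} {d : ℕ →₀ ℕ} (h1 : d 1 = 0) :
    JT p 1 c m d = JT p 2 c m d := by
  rw [JT_apply, JT_apply]
  exact Finset.sum_congr rfl fun s _ => by rw [Gsk_x1zero hp h1]

lemma JT2_x1 {p : ℕ} {c m : ℤ} {d : ℕ →₀ ℕ} (h1 : d 1 ≠ 0) : JT p 2 c m d = 0 := by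
  rw [JT_apply]
  apply Finset.sum_eq_zero
  intro s _
  rw [Gsk2_x1 h1, mul_zero]

lemma degSum_zero : degSum 0 = 0 := by simp [degSum]

lemma coeff_zero (d : ℕ →₀ ℕ) : (0 : R) d = 0 := by
  rw [coeff_eq 0 d, map_zero]

lemma Gsk12_vanish {m : ℤ} (hm : 1 ≤ m) (d : ℕ →₀ ℕ) : Gsk 1 2 m d = 0 := by
  rw [Gsk_eq_sum 1 2 m d (le_refl _)]
  apply Finset.sum_eq_zero
  intro s _
  have hP : prodOneAdd 2 1 = 1 := by
    rw [prodOneAdd, Finset.Icc_eq_empty (by omega), Finset.prod_empty]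
  rw [hP, one_mul, hsym_apply, if_neg, mul_zero]
  rintro ⟨hsupp, hdeg⟩
  have hd0 : d = 0 := by
    ext k
    by_contra hk
    have := hsupp k (Finsupp.mem_support_iff.2 (by simpa using hk))
    omega
  rw [hd0, degSum_zero] at hdeg
  omega

lemma JT12_zero {c m : ℤ} (hm : 1 ≤ m) : JT 1 2 c m = 0 := by
  funext d
  rw [JT_apply, coeff_zero]
  apply Finset.sum_eq_zero
  intro s _
  rw [Gsk12_vanish (by omega), mul_zero]

lemma JT_c0 (p q : ℕ) (m : ℤ) : JT p q 0 m = Gsk p q m := by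
  funext d
  rw [JT_apply]
  rw [Finset.sum_eq_single 0]
  · simp [intChoose_zero]
  · intro b _ hb
    obtain ⟨t, rfl⟩ := Nat.exists_eq_succ_of_ne_zero hb
    rw [intChoose_zero_succ]
    simp
  · intro h
    exact absurd (Finset.mem_range.2 (by omega)) h

lemma geom_apply (i : ℕ) (d : ℕ →₀ ℕ) :
    geom i d = if d.support ⊆ {i} then (-Polynomial.X : A) ^ (d i) else 0 := rfl

lemma u_mul_geom : (1 + bR * Xv 1) * geom 1 = 1 := by
  funext d
  rw [coeff_u_mul, coeff_X_mul, coeff_eq 1 d, MvPowerSeries.coeff_one]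
  by_cases h1 : d 1 = 0
  · rw [if_pos h1, mul_zero, add_zero, geom_apply]
    by_cases hs : d.support ⊆ {1}
    · have hd0 : d = 0 := by
        ext k
        by_cases hk : k = 1
        · subst hk; exact h1
        · by_contra hdk
          have := hs (Finsupp.mem_support_iff.2 hdk)
          simp at this; exact hk this
      rw [if_pos hs, hd0, if_pos rfl]
      simp [Finsupp.coe_zero]
    · rw [if_neg hs, if_neg]
      rintro rfl
      exact hs (by simp)
  · rw [if_neg h1, if_neg (by rintro rfl; simp at h1)]
    set d' := d - Finsupp.single 1 1 with hd'
    rw [geom_apply, geom_apply]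
    by_cases hs : d.support ⊆ {1}
    · have hs' : d'.support ⊆ {1} := fun k hk => hs (Finsupp.support_tsub hk)
      rw [if_pos hs, if_pos hs']
      have hv : d' 1 = d 1 - 1 := by
        rw [hd', Finsupp.tsub_apply, Finsupp.single_eq_same]
      obtain ⟨k, hk⟩ : ∃ k, d 1 = k + 1 := ⟨d 1 - 1, by omega⟩
      rw [hv, hk]
      simp [pow_succ]
      ring
    · have hs' : ¬ d'.support ⊆ {1} := by
        intro hsub
        apply hs
        intro k hk
        by_cases hk1 : k = 1
        · simp [hk1]
        · exact hsub (Finsupp.mem_support_iff.2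
            (by rw [hd', supp_sub_single hk1]; exact Finsupp.mem_support_iff.1 hk))
      rw [if_neg hs, if_neg hs']
      simp

lemma Gsk11_pow (M : ℕ) : Gsk 1 1 (M : ℤ) = Xv 1 ^ M := by
  funext d
  have hP : prodOneAdd 1 1 = 1 + bR * Xv 1 := by
    rw [prodOneAdd, Finset.Icc_self, Finset.prod_singleton]
  have hrhs : (Xv 1 ^ M) d = if d = Finsupp.single 1 M then 1 else 0 := by
    rw [coeff_eq (Xv 1 ^ M) d, Xv, MvPowerSeries.X_pow_eq, MvPowerSeries.coeff_monomial]
  rw [Gsk_eq_sum 1 1 M d (le_refl _), hrhs]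
  have hterm : ∀ s : ℕ, (prodOneAdd 1 1 * hsym 1 1 ((M:ℤ) + s)) d
      = hsym 1 1 ((M:ℤ)+s) d + Polynomial.X *
        (if d 1 = 0 then 0 else hsym 1 1 ((M:ℤ)+s) (d - Finsupp.single 1 1)) := by
    intro s
    rw [hP, coeff_u_mul, coeff_X_mul]
  by_cases hs : d.support ⊆ {1}
  · have hd : d = Finsupp.single 1 (d 1) := by
      ext k
      by_cases hk : k = 1
      · subst hk; simp
      · rw [Finsupp.single_eq_of_ne' (fun h => hk h.symm)]
        by_contra hdk
        have := hs (Finsupp.mem_support_iff.2 hdk)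
        simp at this; exact hk this
    set D := d 1 with hDdef
    have hdeg : degSum d = D := by rw [hd, degSum_single]
    have hsd : ∀ j : ℤ, hsym 1 1 j d = if (D:ℤ) = j then 1 else 0 := by
      intro j
      rw [hsym_apply, hdeg]
      congr 1
      simp only [eq_iff_iff]
      constructor
      · rintro ⟨-, h⟩; exact h
      · intro h; exact ⟨fun k hk => by have := hs hk; simp at this; omega, h⟩
    have heq : (d = Finsupp.single 1 M) ↔ (D = M) := by
      constructor
      · intro h; rw [hDdef, h, Finsupp.single_eq_same]
      · intro h; rw [hd, h]
    by_cases hDM : D = M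
    · -- degSum d = M, N = 1
      have hN : ((degSum d : ℤ) - M).toNat + 1 = 1 := by rw [hdeg, hDM]; simp
      rw [hN, Finset.sum_range_one, hterm 0, if_pos (heq.2 hDM)]
      rw [hsd]
      rw [if_pos (by omega)]
      by_cases h1 : d 1 = 0
      · rw [if_pos h1]; simp
      · rw [if_neg h1]
        have hd' : hsym 1 1 ((M:ℤ)+(0:ℕ)) (d - Finsupp.single 1 1) = 0 := by
          rw [hsym_apply, if_neg]
          rintro ⟨-, hdeg'⟩
          have h2 : degSum d = degSum (d - Finsupp.single 1 1) + 1 := degSum_sub_single h1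
          rw [hdeg] at h2
          omega
        rw [hd']
        simp
    · rw [if_neg (fun h => hDM (heq.1 h))]
      by_cases hlt : D < M
      · have hN : ((degSum d : ℤ) - M).toNat + 1 = 1 := by rw [hdeg]; omega
        rw [hN, Finset.sum_range_one, hterm 0, hsd, if_neg (by omega)]
        by_cases h1 : d 1 = 0
        · rw [if_pos h1]; simp
        · rw [if_neg h1]
          have h2 : degSum d = degSum (d - Finsupp.single 1 1) + 1 := degSum_sub_single h1
          have hd'supp : (d - Finsupp.single 1 1 : ℕ →₀ ℕ).support ⊆ {1} :=
            fun k hk => hs (Finsupp.support_tsub hk)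
          have hd' : hsym 1 1 ((M:ℤ)+(0:ℕ)) (d - Finsupp.single 1 1) = 0 := by
            rw [hsym_apply, if_neg]
            rintro ⟨-, hdeg'⟩
            rw [hdeg] at h2
            omega
          rw [hd']
          simp
      · -- D > M
        have hDM' : M < D := by omega
        have h1 : d 1 ≠ 0 := by rw [← hDdef]; omega
        have h2 : degSum d = degSum (d - Finsupp.single 1 1) + 1 := degSum_sub_single h1
        have hd'supp : (d - Finsupp.single 1 1 : ℕ →₀ ℕ).support ⊆ {1} :=
          fun k hk => hs (Finsupp.support_tsub hk)
        have hsd' : ∀ j : ℤ, hsym 1 1 j (d - Finsupp.single 1 1)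
            = if ((D:ℤ) - 1 = j) then 1 else 0 := by
          intro j
          rw [hsym_apply]
          have : ((degSum (d - Finsupp.single 1 1) : ℕ) : ℤ) = (D:ℤ) - 1 := by
            rw [hdeg] at h2; omega
          rw [this]
          congr 1
          simp only [eq_iff_iff]
          constructor
          · rintro ⟨-, h⟩; exact h
          · intro h; exact ⟨fun k hk => by have := hd'supp hk; simp at this; omega, h⟩
        have hterm2 : ∀ s ∈ Finset.range (((degSum d : ℤ) - M).toNat + 1),
            (-Polynomial.X:A)^s * (prodOneAdd 1 1 * hsym 1 1 ((M:ℤ) + s)) d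
            = (if s = D - M then (-Polynomial.X:A)^s else 0)
              + (if s = D - M - 1 then (-Polynomial.X:A)^s * Polynomial.X else 0) := by
          intro s _
          rw [hterm s, hsd, if_neg h1, hsd']
          by_cases hs1 : s = D - M
          · rw [if_pos (show ((D:ℕ):ℤ) = (M:ℤ) + s by omega),
              if_neg (show ¬(((D:ℕ):ℤ) - 1 = (M:ℤ) + s) by omega),
              if_pos hs1, if_neg (show ¬(s = D - M - 1) by omega)]
            ring
          · rw [if_neg (show ¬(((D:ℕ):ℤ) = (M:ℤ) + s) by omega), if_neg hs1]
            by_cases hs2 : s = D - M - 1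
            · rw [if_pos (show (((D:ℕ):ℤ) - 1 = (M:ℤ) + s) by omega), if_pos hs2]
              ring
            · rw [if_neg (show ¬(((D:ℕ):ℤ) - 1 = (M:ℤ) + s) by omega), if_neg hs2]
              ring
        rw [Finset.sum_congr rfl hterm2, Finset.sum_add_distrib,
          Finset.sum_ite_eq' _ (D - M) (fun s => (-Polynomial.X:A)^s),
          Finset.sum_ite_eq' _ (D - M - 1) (fun s => (-Polynomial.X:A)^s * Polynomial.X),
          if_pos (Finset.mem_range.2 (by rw [hdeg]; omega)),
          if_pos (Finset.mem_range.2 (by rw [hdeg]; omega))]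
        obtain ⟨k, hk⟩ : ∃ k, D - M = k + 1 := ⟨D - M - 1, by omega⟩
        rw [hk, Nat.add_sub_cancel, pow_succ]
        ring
  · -- support not ⊆ {1}
    obtain ⟨k, hk, hk1⟩ : ∃ k, k ∈ d.support ∧ k ≠ 1 := by
      by_contra h
      push_neg at h
      exact hs fun k hk => by simp [h k hk]
    rw [if_neg (by rintro rfl; exact hk1 (by simpa using Finsupp.support_single_subset hk))]
    apply Finset.sum_eq_zero
    intro s _
    have hzero : hsym 1 1 ((M:ℤ)+s) d = 0 := by
      rw [hsym_apply, if_neg]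
      rintro ⟨h, -⟩
      have := h k hk; omega
    have hzero' : hsym 1 1 ((M:ℤ)+s) (d - Finsupp.single 1 1) = 0 := by
      rw [hsym_apply, if_neg]
      rintro ⟨h, -⟩
      have hk' : k ∈ (d - Finsupp.single 1 1 : ℕ →₀ ℕ).support := by
        rw [Finsupp.mem_support_iff, supp_sub_single hk1]
        exact Finsupp.mem_support_iff.1 hk
      have := h k hk'; omega
    rw [hterm s, hzero, hzero']
    simp

lemma JT_rec {p : ℕ} (hp : 1 ≤ p) (c m : ℤ) :
    (1 + bR * Xv 1) * JT p 1 c m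
      = Xv 1 * JT p 1 (c+1) (m-1) + (1 + bR * Xv 1) * JT p 2 c m := by
  funext d
  rw [coeff_add, coeff_u_mul, coeff_u_mul, coeff_X_mul, coeff_X_mul, coeff_X_mul]
  by_cases h1 : d 1 = 0
  · rw [if_pos h1, if_pos h1, if_pos h1]
    simp only [mul_zero, add_zero, zero_add]
    exact JT_x1zero hp h1
  · rw [if_neg h1, if_neg h1, if_neg h1]
    set d' := d - Finsupp.single 1 1 with hd'
    have hD : degSum d = degSum d' + 1 := degSum_sub_single h1
    set N0 := ((degSum d : ℤ) - m).toNat + 1 with hN0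
    have hc1 : ((degSum d : ℤ) - m).toNat + 1 ≤ N0 + 1 := by omega
    have hc2 : ((degSum d' : ℤ) - m).toNat + 1 ≤ N0 + 1 := by omega
    have hc3 : ((degSum d' : ℤ) - (m-1)).toNat + 1 ≤ N0 + 1 := by omega
    rw [JT_eq_sum p 1 c m d hc1, JT_eq_sum p 1 c m d' hc2, JT_eq_sum p 1 (c+1) (m-1) d' hc3,
      JT_eq_sum p 2 c m d hc1, JT_eq_sum p 2 c m d' hc2]
    have grec : ∀ s : ℕ, Gsk p 1 (m + s) d
        = Gsk p 1 ((m-1) + s) d' + (Gsk p 2 (m + s) d + Polynomial.X * Gsk p 2 (m + s) d') := by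
      intro s
      have h2 : m + s - 1 = (m-1) + s := by ring
      rw [congrFun (Gsk_rec hp (m + s)) d, coeff_add, coeff_X_mul, if_neg h1, coeff_u_mul,
        coeff_X_mul, if_neg h1, h2]
    -- abbreviations
    have key : (∑ s ∈ Finset.range (N0+1),
          ((intChoose (c+1) s : ℤ) : A) * Polynomial.X ^ s * Gsk p 1 ((m-1) + s) d')
        = (∑ s ∈ Finset.range (N0+1),
            ((intChoose c s : ℤ) : A) * Polynomial.X ^ s * Gsk p 1 ((m-1) + s) d')
          + Polynomial.X * ∑ s ∈ Finset.range (N0+1),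
              ((intChoose c s : ℤ) : A) * Polynomial.X ^ s * Gsk p 1 (m + s) d' := by
      rw [Finset.sum_range_succ' (fun s => ((intChoose (c+1) s : ℤ) : A) * Polynomial.X ^ s
          * Gsk p 1 ((m-1) + s) d') N0]
      have hsplit : ∀ i : ℕ, ((intChoose (c+1) (i+1) : ℤ) : A) * Polynomial.X ^ (i+1)
            * Gsk p 1 ((m-1) + (i+1 : ℕ)) d'
          = ((intChoose c (i+1) : ℤ) : A) * Polynomial.X ^ (i+1) * Gsk p 1 ((m-1) + (i+1:ℕ)) d'
            + Polynomial.X * (((intChoose c i : ℤ) : A) * Polynomial.X ^ i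
                * Gsk p 1 (m + i) d') := by
        intro i
        have hmi : (m-1) + ((i:ℕ)+1 : ℕ) = m + i := by push_cast; ring
        rw [pascal, hmi]
        push_cast
        ring
      simp_rw [hsplit]
      rw [Finset.sum_add_distrib]
      rw [Finset.sum_range_succ (fun s => ((intChoose c s : ℤ) : A) * Polynomial.X ^ s
          * Gsk p 1 (m + s) d') N0]
      have hvan : Gsk p 1 (m + N0) d' = 0 := by
        apply Gsk_vanish
        omega
      rw [hvan, mul_zero, add_zero, Finset.mul_sum]
      rw [Finset.sum_range_succ' (fun s => ((intChoose c s : ℤ) : A) * Polynomial.X ^ s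
          * Gsk p 1 ((m-1) + s) d') N0]
      simp [intChoose_zero]
      ring
    rw [key]
    simp_rw [grec, mul_add]
    rw [Finset.sum_add_distrib, Finset.sum_add_distrib, Finset.mul_sum, Finset.mul_sum]
    have hc2' : ∀ s : ℕ, ((intChoose c s : ℤ) : A) * Polynomial.X ^ s
          * (Polynomial.X * Gsk p 2 (m + s) d')
        = Polynomial.X * (((intChoose c s : ℤ) : A) * Polynomial.X ^ s * Gsk p 2 (m + s) d') :=
      fun s => by ring
    simp_rw [hc2']
    abel

lemma JT_rec' {p : ℕ} (hp : 1 ≤ p) (c m : ℤ) :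
    JT p 1 c m = (Xv 1 * geom 1) * JT p 1 (c+1) (m-1) + JT p 2 c m := by
  have h := JT_rec hp c m
  calc JT p 1 c m = (geom 1 * (1 + bR * Xv 1)) * JT p 1 c m := by
        rw [mul_comm (geom 1), u_mul_geom, one_mul]
    _ = geom 1 * ((1 + bR * Xv 1) * JT p 1 c m) := by ring
    _ = geom 1 * (Xv 1 * JT p 1 (c+1) (m-1) + (1 + bR * Xv 1) * JT p 2 c m) := by rw [h]
    _ = (Xv 1 * geom 1) * JT p 1 (c+1) (m-1) + (geom 1 * (1 + bR * Xv 1)) * JT p 2 c m := by ring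
    _ = (Xv 1 * geom 1) * JT p 1 (c+1) (m-1) + JT p 2 c m := by
        rw [mul_comm (geom 1), u_mul_geom, one_mul]

lemma setX1Zero_apply (F : R) (d : ℕ →₀ ℕ) :
    setX1Zero F d = if d 1 = 0 then F d else 0 := rfl

lemma JT_congr (p q : ℕ) {c c' m m' : ℤ} (hc : c = c') (hm : m = m') :
    JT p q c m = JT p q c' m' := by rw [hc, hm]

lemma setX1Zero_one : setX1Zero 1 = 1 := by
    funext d
    rw [setX1Zero_apply]
    by_cases h1 : d 1 = 0
    · rw [if_pos h1]
    · rw [if_neg h1, coeff_eq 1 d, MvPowerSeries.coeff_one, if_neg (by rintro rfl; simp at h1)]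

lemma setX1Zero_mul (x y : R) : setX1Zero (x * y) = setX1Zero x * setX1Zero y := by
    funext d
    rw [setX1Zero_apply]
    by_cases h1 : d 1 = 0
    · rw [if_pos h1, coeff_eq (x*y) d, coeff_eq (setX1Zero x * setX1Zero y) d,
        MvPowerSeries.coeff_mul, MvPowerSeries.coeff_mul]
      apply Finset.sum_congr rfl
      rintro ⟨e, e'⟩ hm
      rw [Finset.HasAntidiagonal.mem_antidiagonal] at hm
      have he : e 1 = 0 ∧ e' 1 = 0 := by
        have : e 1 + e' 1 = d 1 := by rw [← hm]; rfl
        omega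
      rw [← coeff_eq (setX1Zero x) e, ← coeff_eq (setX1Zero y) e', ← coeff_eq x e, ← coeff_eq y e',
        setX1Zero_apply, setX1Zero_apply, if_pos he.1, if_pos he.2]
    · rw [if_neg h1, coeff_eq (setX1Zero x * setX1Zero y) d, MvPowerSeries.coeff_mul]
      symm
      apply Finset.sum_eq_zero
      rintro ⟨e, e'⟩ hm
      rw [Finset.HasAntidiagonal.mem_antidiagonal] at hm
      have he : e 1 ≠ 0 ∨ e' 1 ≠ 0 := by
        have : e 1 + e' 1 = d 1 := by rw [← hm]; rfl
        omega
      rcases he with he | he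
      · rw [← coeff_eq (setX1Zero x) e, setX1Zero_apply, if_neg he, zero_mul]
      · rw [← coeff_eq (setX1Zero y) e', setX1Zero_apply, if_neg he, mul_zero]

lemma setX1Zero_add (x y : R) : setX1Zero (x + y) = setX1Zero x + setX1Zero y := by
    funext d
    rw [coeff_add, setX1Zero_apply, coeff_add, setX1Zero_apply, setX1Zero_apply]
    split_ifs <;> simp

lemma setX1Zero_zero : setX1Zero 0 = 0 := by
    funext d
    rw [setX1Zero_apply, coeff_zero]
    split_ifs <;> rfl

def sXhom : R →+* R where
  toFun := setX1Zero
  map_one' := setX1Zero_one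
  map_mul' := setX1Zero_mul
  map_zero' := setX1Zero_zero
  map_add' := setX1Zero_add

lemma setX1Zero_JT {p : ℕ} (hp : 1 ≤ p) (c m : ℤ) :
    setX1Zero (JT p 1 c m) = JT p 2 c m := by
  funext d
  rw [setX1Zero_apply]
  by_cases h1 : d 1 = 0
  · rw [if_pos h1, JT_x1zero hp h1]
  · rw [if_neg h1, JT2_x1 h1]

theorem stmt7 (r : ℕ) (hr : 0 < r) (lam f : Fin r → ℕ)
    (hlam_anti : ∀ i j : Fin r, i ≤ j → lam j ≤ lam i) (hlam_pos : ∀ i, 0 < lam i)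
    (hf_mono : ∀ i j : Fin r, i ≤ j → f i ≤ f j) (hf_pos : ∀ i, 0 < f i)
    (hf1 : f ⟨0, hr⟩ = 1) :
    Gtilde r lam f =
      Xv 1 ^ (lam ⟨0, hr⟩) *
        setX1Zero (Gtilde (r - 1)
          (fun i => lam ⟨(i : ℕ) + 1, Nat.add_lt_of_lt_sub i.isLt⟩)
          (fun i => f ⟨(i : ℕ) + 1, Nat.add_lt_of_lt_sub i.isLt⟩)) := by
  obtain ⟨n, rfl⟩ : ∃ n, r = n + 1 := ⟨r - 1, by omega⟩
  have h00 : (⟨0, hr⟩ : Fin (n+1)) = 0 := rfl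
  set t : R := Xv 1 * geom 1 with ht
  set M : Matrix (Fin (n+1)) (Fin (n+1)) R := Matrix.of fun i j : Fin (n+1) =>
    JT (f i) ((fun _ : Fin (n+1) => 1) j) ((i : ℤ) - (j : ℤ))
      ((lam i : ℤ) - (((fun _ : Fin (n+1) => (0:ℕ)) j) : ℤ) + (j : ℤ) - (i : ℤ)) with hM
  have hGt : Gtilde (n+1) lam f = M.det := rfl
  set E : Matrix (Fin (n+1)) (Fin (n+1)) R := Matrix.of fun j k : Fin (n+1) =>
    Fin.cases (motive := fun _ => R) (if j = 0 then (1:R) else 0)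
      (fun k' => if j = k'.succ then 1 else if j = k'.castSucc then -t else 0) k with hE
  have hdetE : E.det = 1 := by
    have htri : E.BlockTriangular (id : Fin (n+1) → Fin (n+1)) := by
      intro a b hab
      simp only [id] at hab
      induction b using Fin.cases with
      | zero =>
          have : a ≠ 0 := by intro h; rw [h] at hab; exact absurd hab (lt_irrefl _)
          simp only [hE, Matrix.of_apply, Fin.cases_zero]
          rw [if_neg this]
      | succ k' =>
          simp only [hE, Matrix.of_apply, Fin.cases_succ]
          rw [if_neg (by intro h; rw [h] at hab; exact absurd hab (lt_irrefl _)),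
            if_neg (by intro h; rw [h] at hab
                       exact absurd (lt_trans (Fin.castSucc_lt_succ (i := k')) hab)
                         (lt_irrefl _))]
    rw [Matrix.det_of_upperTriangular htri]
    apply Finset.prod_eq_one
    intro i _
    induction i using Fin.cases with
    | zero => simp [hE]
    | succ k' => simp [hE]
  have hMdet : M.det = (M * E).det := by rw [Matrix.det_mul, hdetE, mul_one]
  have hN0 : ∀ i, (M * E) i 0 = M i 0 := by
    intro i
    rw [Matrix.mul_apply]
    have : ∀ j : Fin (n+1), M i j * E j 0 = if j = 0 then M i j else 0 := by
      intro j
      simp only [hE, Matrix.of_apply, Fin.cases_zero]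
      split_ifs <;> simp
    simp_rw [this]
    rw [Finset.sum_ite_eq' Finset.univ (0 : Fin (n+1)) (fun j => M i j)]
    simp
  have hNsucc : ∀ (i : Fin (n+1)) (k' : Fin n),
      (M * E) i k'.succ = M i k'.succ - t * M i k'.castSucc := by
    intro i k'
    rw [Matrix.mul_apply]
    have : ∀ j : Fin (n+1), M i j * E j k'.succ
        = (if j = k'.succ then M i j else 0) + (if j = k'.castSucc then -t * M i j else 0) := by
      intro j
      simp only [hE, Matrix.of_apply, Fin.cases_succ]
      by_cases h1 : j = k'.succ
      · rw [if_pos h1, if_pos h1, if_neg (by rw [h1]; exact (Fin.castSucc_lt_succ (i := k')).ne')]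
        simp
      · rw [if_neg h1, if_neg h1]
        by_cases h2 : j = k'.castSucc
        · rw [if_pos h2, if_pos h2]; ring
        · rw [if_neg h2, if_neg h2]; simp
    simp_rw [this]
    rw [Finset.sum_add_distrib,
      Finset.sum_ite_eq' Finset.univ (k'.succ) (fun j => M i j),
      Finset.sum_ite_eq' Finset.univ (k'.castSucc) (fun j => -t * M i j)]
    simp only [Finset.mem_univ, if_true]
    ring
  -- row zero entries
  have hf0 : f 0 = 1 := hf1
  have hrow00 : (M * E) 0 0 = Xv 1 ^ (lam 0) := by
    rw [hN0 0]
    show JT (f 0) 1 (((0:Fin (n+1)):ℤ) - ((0:Fin (n+1)):ℤ))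
      ((lam 0 : ℤ) - ((0:ℕ):ℤ) + ((0:Fin (n+1)):ℤ) - ((0:Fin (n+1)):ℤ)) = _
    rw [hf0, JT_congr 1 1 (c' := 0) (m' := (lam 0 : ℤ)) (by simp) (by simp), JT_c0, Gsk11_pow]
  have hrow0succ : ∀ k' : Fin n, (M * E) 0 k'.succ = 0 := by
    intro k'
    rw [hNsucc 0 k']
    have hm : M 0 k'.succ = JT 1 1 (((0:Fin (n+1)):ℤ) - ((k'.succ : Fin (n+1)):ℤ))
        ((lam 0 : ℤ) - 0 + ((k'.succ : Fin (n+1)):ℤ) - ((0:Fin (n+1)):ℤ)) := by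
      show JT (f 0) 1 _ _ = _
      rw [hf0]
      exact JT_congr 1 1 rfl (by norm_num)
    have hmc : M 0 k'.castSucc = JT 1 1 (((0:Fin (n+1)):ℤ) - ((k'.castSucc : Fin (n+1)):ℤ))
        ((lam 0 : ℤ) - 0 + ((k'.castSucc : Fin (n+1)):ℤ) - ((0:Fin (n+1)):ℤ)) := by
      show JT (f 0) 1 _ _ = _
      rw [hf0]
      exact JT_congr 1 1 rfl (by norm_num)
    rw [hm, hmc]
    have hrec := JT_rec' (le_refl 1) (((0:Fin (n+1)):ℤ) - ((k'.succ : Fin (n+1)):ℤ))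
        ((lam 0 : ℤ) - 0 + ((k'.succ : Fin (n+1)):ℤ) - ((0:Fin (n+1)):ℤ))
    rw [JT12_zero (by
        have h1 : ((k'.succ : Fin (n+1)):ℤ) = (k' : ℤ) + 1 := by
          rw [Fin.val_succ]; push_cast; ring
        have h2 : (((0:Fin (n+1)):ℕ):ℤ) = 0 := by simp
        rw [h1, h2]
        have := hlam_pos 0
        omega), add_zero] at hrec
    rw [hrec, JT_congr 1 1
      (c' := ((0:Fin (n+1)):ℤ) - ((k'.castSucc : Fin (n+1)):ℤ))
      (m' := (lam 0 : ℤ) - 0 + ((k'.castSucc : Fin (n+1)):ℤ) - ((0:Fin (n+1)):ℤ))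
      (by rw [Fin.val_succ, Fin.coe_castSucc]; push_cast; ring)
      (by rw [Fin.val_succ, Fin.coe_castSucc]; push_cast; ring)]
    ring
  -- Laplace expansion
  rw [hGt, hMdet, Matrix.det_succ_row_zero]
  rw [Finset.sum_eq_single 0]
  · rw [hrow00, Fin.succAbove_zero]
    have hminor : ((M * E).submatrix Fin.succ Fin.succ)
        = Matrix.of (fun i j : Fin n => JT (f i.succ) 2 ((i:ℤ) - (j:ℤ))
            ((lam i.succ : ℤ) + (j:ℤ) - (i:ℤ))) := by
      ext i j : 1
      rw [Matrix.submatrix_apply, hNsucc i.succ j]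
      have hm : M i.succ j.succ = JT (f i.succ) 1 (((i.succ : Fin (n+1)):ℤ) - ((j.succ : Fin (n+1)):ℤ))
          ((lam i.succ : ℤ) - 0 + ((j.succ : Fin (n+1)):ℤ) - ((i.succ : Fin (n+1)):ℤ)) := rfl
      have hmc : M i.succ j.castSucc = JT (f i.succ) 1
          (((i.succ : Fin (n+1)):ℤ) - ((j.castSucc : Fin (n+1)):ℤ))
          ((lam i.succ : ℤ) - 0 + ((j.castSucc : Fin (n+1)):ℤ) - ((i.succ : Fin (n+1)):ℤ)) := rfl
      have hp : 1 ≤ f i.succ := hf_pos i.succ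
      have hrec := JT_rec' hp (((i.succ : Fin (n+1)):ℤ) - ((j.succ : Fin (n+1)):ℤ))
          ((lam i.succ : ℤ) - 0 + ((j.succ : Fin (n+1)):ℤ) - ((i.succ : Fin (n+1)):ℤ))
      rw [hm, hmc, hrec, JT_congr (f i.succ) 1
        (c' := ((i.succ : Fin (n+1)):ℤ) - ((j.castSucc : Fin (n+1)):ℤ))
        (m' := (lam i.succ : ℤ) - 0 + ((j.castSucc : Fin (n+1)):ℤ) - ((i.succ : Fin (n+1)):ℤ))
        (by rw [Fin.val_succ, Fin.val_succ, Fin.coe_castSucc]; push_cast; ring)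
        (by rw [Fin.val_succ, Fin.val_succ, Fin.coe_castSucc]; push_cast; ring)]
      rw [Matrix.of_apply]
      rw [JT_congr (f i.succ) 2
        (c' := (i:ℤ) - (j:ℤ)) (m' := (lam i.succ : ℤ) + (j:ℤ) - (i:ℤ))
        (by rw [Fin.val_succ, Fin.val_succ]; push_cast; ring)
        (by rw [Fin.val_succ, Fin.val_succ]; push_cast; ring)]
      ring
    rw [hminor]
    have hrhs : setX1Zero (Gtilde (n+1-1)
          (fun i => lam ⟨(i : ℕ) + 1, Nat.add_lt_of_lt_sub i.isLt⟩)
          (fun i => f ⟨(i : ℕ) + 1, Nat.add_lt_of_lt_sub i.isLt⟩))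
        = (Matrix.of (fun i j : Fin n => JT (f i.succ) 2 ((i:ℤ) - (j:ℤ))
            ((lam i.succ : ℤ) + (j:ℤ) - (i:ℤ)))).det := by
      have hG : Gtilde (n+1-1)
          (fun i => lam ⟨(i : ℕ) + 1, Nat.add_lt_of_lt_sub i.isLt⟩)
          (fun i => f ⟨(i : ℕ) + 1, Nat.add_lt_of_lt_sub i.isLt⟩)
          = (Matrix.of (fun i j : Fin n => JT (f i.succ) 1 ((i:ℤ) - (j:ℤ))
              ((lam i.succ : ℤ) - ((0:ℕ):ℤ) + (j:ℤ) - (i:ℤ)))).det := rfl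
      rw [hG]
      have hmapdet := RingHom.map_det sXhom (Matrix.of (fun i j : Fin n =>
          JT (f i.succ) 1 ((i:ℤ) - (j:ℤ)) ((lam i.succ : ℤ) - ((0:ℕ):ℤ) + (j:ℤ) - (i:ℤ))))
      have hcoe : ∀ x : R, sXhom x = setX1Zero x := fun _ => rfl
      rw [← hcoe, hmapdet]
      have hmx : sXhom.mapMatrix (Matrix.of (fun i j : Fin n =>
          JT (f i.succ) 1 ((i:ℤ) - (j:ℤ)) ((lam i.succ : ℤ) - ((0:ℕ):ℤ) + (j:ℤ) - (i:ℤ))))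
          = Matrix.of (fun i j : Fin n => JT (f i.succ) 2 ((i:ℤ) - (j:ℤ))
            ((lam i.succ : ℤ) + (j:ℤ) - (i:ℤ))) := by
        apply Matrix.ext
        intro i j
        rw [RingHom.mapMatrix_apply, Matrix.map_apply, Matrix.of_apply, Matrix.of_apply, hcoe,
          setX1Zero_JT (hf_pos i.succ)]
        exact JT_congr _ 2 rfl (by push_cast; ring)
      rw [hmx]
    rw [hrhs, h00]
    rw [show (((0:Fin (n+1)) : ℕ)) = 0 from rfl, pow_zero, one_mul]
  · intro b _ hb
    obtain ⟨k', rfl⟩ := Fin.eq_succ_of_ne_zero hb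
    rw [hrow0succ k']
    ring
  · intro h
    exact absurd (Finset.mem_univ 0) h


end
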